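/- For every n ≥ 2 there exists a complete NFA with state set Q = {1,2,…,n} and exactly 2n−2 symbols such that the shortest word synchronizing the full state set Q has length exactly 2^{n−1} − 1, and the shortest word synchronizing the subset {n−1, n} has length exactly 2^{n−2}. -/

import Mathlib

/-- Action of an NFA transition function on a subset of states along a word. -/
def nfaRun {n m : ℕ} (δ : Fin n → Fin m → Finset (Fin n)) :
    Finset (Fin n) → List (Fin m) → Finset (Fin n)
  | S, [] => S
  | S, a :: w => nfaRun δ (S.biUnion fun q => δ q a) w

/-- A word `w` synchronizes the subset `S` in the NFA `δ`. -/
def nfaSync {n m : ℕ} (δ : Fin n → Fin m → Finset (Fin n)) (S : Finset (Fin n))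
    (w : List (Fin m)) : Prop :=
  (nfaRun δ S w).card = 1

/-- `l` is the length of a shortest word synchronizing `S` in the NFA `δ`. -/
def nfaShortestSync {n m : ℕ} (δ : Fin n → Fin m → Finset (Fin n)) (S : Finset (Fin n))
    (l : ℕ) : Prop :=
  (∃ w, nfaSync δ S w ∧ w.length = l) ∧ ∀ w, nfaSync δ S w → l ≤ w.length

open Finset

variable {k : ℕ}

def anc (k : ℕ) : Fin (k+2) := ⟨k+1, by omega⟩

def dlt (k : ℕ) (q : Fin (k+2)) (a : Fin (2*(k+2)-2)) : Finset (Fin (k+2)) :=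
  if (a:ℕ) < k+1 then
    if (a:ℕ) < (q:ℕ) then {q}
    else if (q:ℕ) = (a:ℕ) then
      (if (a:ℕ) = 0 then {anc k} else Finset.univ.filter (fun p => (p:ℕ) < (a:ℕ)))
    else Finset.univ
  else Finset.univ

def stp (k : ℕ) (S : Finset (Fin (k+2))) (a : Fin (2*(k+2)-2)) : Finset (Fin (k+2)) :=
  S.biUnion fun q => dlt k q a

def fwt (k : ℕ) (q : Fin (k+2)) : ℕ := if (q:ℕ) = k+1 then 0 else 2^(q:ℕ)

def Vv (k : ℕ) (S : Finset (Fin (k+2))) : ℕ := ∑ q ∈ S, fwt k q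

lemma dlt_nonempty (k : ℕ) (q : Fin (k+2)) (a : Fin (2*(k+2)-2)) : (dlt k q a).Nonempty := by
  unfold dlt
  split_ifs with h1 h2 h3 h4
  · exact ⟨q, mem_singleton_self q⟩
  · exact ⟨anc k, mem_singleton_self _⟩
  · exact ⟨⟨0, by omega⟩, by simp; omega⟩
  · exact ⟨anc k, mem_univ _⟩
  · exact ⟨anc k, mem_univ _⟩

lemma anc_mem_dlt (k : ℕ) (a : Fin (2*(k+2)-2)) : anc k ∈ dlt k (anc k) a := by
  unfold dlt
  split_ifs with h1 h2 h3 h4 <;> simp_all [anc] <;> omega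

lemma anc_mem_stp (k : ℕ) {S : Finset (Fin (k+2))} (hS : anc k ∈ S) (a : Fin (2*(k+2)-2)) :
    anc k ∈ stp k S a :=
  mem_biUnion.2 ⟨anc k, hS, anc_mem_dlt k a⟩

lemma Vv_mono (k : ℕ) {S T : Finset (Fin (k+2))} (h : S ⊆ T) : Vv k S ≤ Vv k T :=
  Finset.sum_le_sum_of_subset h

lemma sum_filter_lt (k t : ℕ) (ht : t ≤ k+1) :
    Vv k (Finset.univ.filter (fun p : Fin (k+2) => (p:ℕ) < t)) = 2^t - 1 := by
  induction t with
  | zero => simp [Vv]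
  | succ t ih =>
    have h1 : (Finset.univ.filter (fun p : Fin (k+2) => (p:ℕ) < t+1))
        = insert ⟨t, by omega⟩ (Finset.univ.filter (fun p : Fin (k+2) => (p:ℕ) < t)) := by
      ext x
      simp [Fin.ext_iff]
      omega
    rw [h1]
    have h2 : (⟨t, by omega⟩ : Fin (k+2)) ∉ Finset.univ.filter (fun p : Fin (k+2) => (p:ℕ) < t) := by
      simp
    rw [Vv, Finset.sum_insert h2, ← Vv, ih (by omega)]
    have : fwt k ⟨t, by omega⟩ = 2^t := by
      unfold fwt; simp; omega
    rw [this]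
    have : 1 ≤ 2^t := Nat.one_le_two_pow
    have : 2^(t+1) = 2^t + 2^t := by ring
    omega

lemma Vv_univ (k : ℕ) : Vv k (Finset.univ : Finset (Fin (k+2))) = 2^(k+1) - 1 := by
  have h : (Finset.univ : Finset (Fin (k+2)))
      = insert (anc k) (Finset.univ.filter (fun p : Fin (k+2) => (p:ℕ) < k+1)) := by
    ext x
    simp [anc, Fin.ext_iff]
    omega
  rw [h, Vv, Finset.sum_insert (by simp [anc]), ← Vv, sum_filter_lt k (k+1) le_rfl]
  simp [fwt, anc]

lemma dlt_of_lt {q : Fin (k+2)} {a : Fin (2*(k+2)-2)} (ha : (a:ℕ) < k+1)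
    (h : (a:ℕ) < (q:ℕ)) : dlt k q a = {q} := by
  unfold dlt; rw [if_pos ha, if_pos h]

lemma dlt_of_gt {q : Fin (k+2)} {a : Fin (2*(k+2)-2)} (ha : (a:ℕ) < k+1)
    (h : (q:ℕ) < (a:ℕ)) : dlt k q a = Finset.univ := by
  unfold dlt; rw [if_pos ha, if_neg (by omega), if_neg (by omega)]

lemma dlt_of_eq {q : Fin (k+2)} {a : Fin (2*(k+2)-2)} (ha : (a:ℕ) < k+1)
    (h : (q:ℕ) = (a:ℕ)) :
    dlt k q a = if (a:ℕ) = 0 then ({anc k} : Finset (Fin (k+2)))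
      else Finset.univ.filter (fun p => (p:ℕ) < (a:ℕ)) := by
  unfold dlt; rw [if_pos ha, if_neg (by omega), if_pos h]

lemma dlt_of_big {q : Fin (k+2)} {a : Fin (2*(k+2)-2)} (ha : ¬ (a:ℕ) < k+1) :
    dlt k q a = Finset.univ := by
  unfold dlt; rw [if_neg ha]

/-- Each step decreases `Vv` by at most 1. -/
lemma dec_le {S : Finset (Fin (k+2))} (hS : anc k ∈ S) (a : Fin (2*(k+2)-2)) :
    Vv k S ≤ Vv k (stp k S a) + 1 := by
  have hle : Vv k S ≤ 2^(k+1) - 1 := (Vv_univ k) ▸ Vv_mono k (subset_univ S)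
  by_cases ha : (a:ℕ) < k+1
  · by_cases hq : ∃ q ∈ S, (q:ℕ) < (a:ℕ)
    · obtain ⟨q, hqS, hq⟩ := hq
      have : (Finset.univ : Finset (Fin (k+2))) ⊆ stp k S a := by
        intro x _
        exact mem_biUnion.2 ⟨q, hqS, by rw [dlt_of_gt ha hq]; exact mem_univ x⟩
      have := Vv_mono k this
      rw [Vv_univ k] at this
      omega
    · push_neg at hq
      by_cases haS : ∃ q ∈ S, (q:ℕ) = (a:ℕ)
      · obtain ⟨qa, hqaS, hqa⟩ := haS
        have herase : S.erase qa ⊆ stp k S a := by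
          intro x hx
          have hxS := mem_of_mem_erase hx
          have hxne : (x:ℕ) ≠ (qa:ℕ) := fun h => (ne_of_mem_erase hx) (Fin.ext h)
          have hxgt : (a:ℕ) < (x:ℕ) := lt_of_le_of_ne (hq x hxS) (by omega)
          exact mem_biUnion.2 ⟨x, hxS, by rw [dlt_of_lt ha hxgt]; exact mem_singleton_self x⟩
        have hVS : Vv k S = fwt k qa + Vv k (S.erase qa) := (Finset.add_sum_erase S _ hqaS).symm
        have hfqa : fwt k qa = 2^(a:ℕ) := by unfold fwt; rw [hqa, if_neg (by omega)]
        by_cases ha0 : (a:ℕ) = 0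
        · have hfqa1 : fwt k qa = 1 := by rw [hfqa, ha0, pow_zero]
          have := Vv_mono k herase
          omega
        · -- stp contains erase ∪ filter, disjoint
          have hfilt : Finset.univ.filter (fun p : Fin (k+2) => (p:ℕ) < (a:ℕ)) ⊆ stp k S a := by
            intro x hx
            refine mem_biUnion.2 ⟨qa, hqaS, ?_⟩
            rw [dlt_of_eq ha hqa, if_neg ha0]
            exact hx
          have hdisj : Disjoint (S.erase qa)
              (Finset.univ.filter (fun p : Fin (k+2) => (p:ℕ) < (a:ℕ))) := by
            rw [Finset.disjoint_left]
            intro x hx hx2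
            have hxS := mem_of_mem_erase hx
            have := hq x hxS
            simp at hx2
            omega
          have hsub : S.erase qa ∪ Finset.univ.filter (fun p : Fin (k+2) => (p:ℕ) < (a:ℕ))
              ⊆ stp k S a := union_subset herase hfilt
          have := Vv_mono k hsub
          rw [Vv, Finset.sum_union hdisj, ← Vv, ← Vv] at this
          rw [sum_filter_lt k (a:ℕ) (by omega)] at this
          have h2 : 1 ≤ 2^(a:ℕ) := Nat.one_le_two_pow
          omega
      · push_neg at haS
        have : S ⊆ stp k S a := by
          intro x hx
          have : (a:ℕ) < (x:ℕ) := lt_of_le_of_ne (hq x hx) (fun h => haS x hx h.symm)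
          exact mem_biUnion.2 ⟨x, hx, by rw [dlt_of_lt ha this]; exact mem_singleton_self x⟩
        have := Vv_mono k this
        omega
  · have : (Finset.univ : Finset (Fin (k+2))) ⊆ stp k S a := by
      intro x _
      exact mem_biUnion.2 ⟨anc k, hS, by rw [dlt_of_big ha]; exact mem_univ x⟩
    have := Vv_mono k this
    rw [Vv_univ k] at this
    omega

/-- If `S` is not yet the anchor singleton, some letter decreases `Vv` by exactly 1. -/
lemma dec_exact {S : Finset (Fin (k+2))} (hS : anc k ∈ S) (hV : Vv k S ≠ 0) :
    ∃ a : Fin (2*(k+2)-2), anc k ∈ stp k S a ∧ Vv k (stp k S a) + 1 = Vv k S := by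
  -- find minimal non-anchor element
  have hT : (S.filter (fun q => q ≠ anc k)).Nonempty := by
    by_contra h
    apply hV
    rw [Finset.not_nonempty_iff_eq_empty, Finset.filter_eq_empty_iff] at h
    apply Finset.sum_eq_zero
    intro q hq
    have hqa : q = anc k := by
      by_contra hne
      exact (h hq) hne
    unfold fwt
    rw [if_pos (by rw [hqa]; rfl)]
  set i := (S.filter (fun q => q ≠ anc k)).min' hT with hidef
  have hiS : i ∈ S ∧ i ≠ anc k := by
    have := Finset.min'_mem _ hT
    simpa using this
  have hival : (i:ℕ) ≠ k+1 := fun hh => hiS.2 (Fin.ext hh)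
  have hik : (i:ℕ) ≤ k := by have := i.isLt; omega
  have hmin : ∀ q ∈ S, ¬ ((q:ℕ) < (i:ℕ)) := by
    intro q hqS hlt
    have hqne : q ≠ anc k := by
      intro hh
      have : (q:ℕ) = k+1 := by rw [hh]; rfl
      omega
    have : i ≤ q := Finset.min'_le _ q (by simp [hqS, hqne])
    exact absurd hlt (not_lt.2 this)
  refine ⟨⟨(i:ℕ), by omega⟩, ?_⟩
  set a : Fin (2*(k+2)-2) := ⟨(i:ℕ), by omega⟩ with hadef
  have ha : (a:ℕ) < k+1 := by simp [hadef]; omega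
  have hai : (a:ℕ) = (i:ℕ) := rfl
  -- compute stp exactly
  have hstp : stp k S a = (S.erase i) ∪
      (if (i:ℕ) = 0 then ({anc k} : Finset (Fin (k+2)))
        else Finset.univ.filter (fun p => (p:ℕ) < (i:ℕ))) := by
    ext x
    simp only [stp, mem_biUnion, mem_union]
    constructor
    · rintro ⟨q, hqS, hx⟩
      rcases lt_trichotomy ((a:ℕ)) ((q:ℕ)) with h | h | h
      · rw [dlt_of_lt ha h] at hx
        simp at hx
        subst hx
        left
        exact Finset.mem_erase.2 ⟨by intro hh; subst hh; omega, hqS⟩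
      · rw [dlt_of_eq ha h.symm] at hx
        right
        rw [hai] at hx
        exact hx
      · exact absurd (by omega : (q:ℕ) < (i:ℕ)) (hmin q hqS)
    · rintro (hx | hx)
      · refine ⟨x, Finset.mem_of_mem_erase hx, ?_⟩
        have hxi : (a:ℕ) < (x:ℕ) := by
          have h1 := hmin x (Finset.mem_of_mem_erase hx)
          have h2 : x ≠ i := Finset.ne_of_mem_erase hx
          have : (x:ℕ) ≠ (i:ℕ) := fun hh => h2 (Fin.ext hh)
          omega
        rw [dlt_of_lt ha hxi]
        exact mem_singleton_self x
      · exact ⟨i, hiS.1, by rw [dlt_of_eq ha hai.symm, hai]; exact hx⟩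
  have hVS : Vv k S = fwt k i + Vv k (S.erase i) := (Finset.add_sum_erase S _ hiS.1).symm
  have hfi : fwt k i = 2^(i:ℕ) := by unfold fwt; rw [if_neg hival]
  constructor
  · exact anc_mem_stp k hS a
  · rw [hstp]
    by_cases hi0 : (i:ℕ) = 0
    · rw [if_pos hi0]
      have hancmem : anc k ∈ S.erase i := Finset.mem_erase.2
        ⟨by intro hh; have := congrArg Fin.val hh; simp [anc] at this; omega, hS⟩
      have : S.erase i ∪ {anc k} = S.erase i := Finset.union_eq_left.2 (by simpa using hancmem)
      rw [this]
      have hfi1 : fwt k i = 1 := by rw [hfi, hi0, pow_zero]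
      omega
    · rw [if_neg hi0]
      have hdisj : Disjoint (S.erase i)
          (Finset.univ.filter (fun p : Fin (k+2) => (p:ℕ) < (i:ℕ))) := by
        rw [Finset.disjoint_left]
        intro x hx hx2
        simp at hx2
        exact hmin x (Finset.mem_of_mem_erase hx) hx2
      rw [Vv, Finset.sum_union hdisj, ← Vv, ← Vv, sum_filter_lt k (i:ℕ) (by omega)]
      have h2 : 1 ≤ 2^(i:ℕ) := Nat.one_le_two_pow
      omega

/-- `Vv S = 0` forces `S ⊆ {anc}`. -/
lemma eq_anc_of_Vv_zero {S : Finset (Fin (k+2))} (hS : anc k ∈ S) (hV : Vv k S = 0) :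
    S = {anc k} := by
  apply Finset.Subset.antisymm
  · intro q hq
    have hz := Finset.sum_eq_zero_iff.1 hV q hq
    unfold fwt at hz
    simp only [mem_singleton]
    by_contra hne
    have hval : ¬ ((q:ℕ) = k+1) := fun hh => hne (Fin.ext (by simpa [anc] using hh))
    rw [if_neg hval] at hz
    exact absurd hz (by positivity)
  · simp [hS]

lemma run_cons {k : ℕ} (S : Finset (Fin (k+2))) (a : Fin (2*(k+2)-2)) (w : List _) :
    nfaRun (dlt k) S (a :: w) = nfaRun (dlt k) (stp k S a) w := rfl

lemma exists_word (k : ℕ) : ∀ v (S : Finset (Fin (k+2))), anc k ∈ S → Vv k S = v →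
    ∃ w : List (Fin (2*(k+2)-2)), w.length = v ∧ nfaRun (dlt k) S w = {anc k} := by
  intro v
  induction v with
  | zero =>
    intro S hS hV
    exact ⟨[], rfl, eq_anc_of_Vv_zero hS hV⟩
  | succ v ih =>
    intro S hS hV
    obtain ⟨a, hanc, hdec⟩ := dec_exact hS (by omega)
    obtain ⟨w, hlen, hrun⟩ := ih (stp k S a) hanc (by omega)
    exact ⟨a :: w, by simp [hlen], by rw [run_cons]; exact hrun⟩

lemma lower_bound (k : ℕ) : ∀ (w : List (Fin (2*(k+2)-2))) (S : Finset (Fin (k+2))),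
    anc k ∈ S → anc k ∈ nfaRun (dlt k) S w ∧
      Vv k S ≤ Vv k (nfaRun (dlt k) S w) + w.length := by
  intro w
  induction w with
  | nil => intro S hS; exact ⟨hS, by simp [nfaRun]⟩
  | cons a w ih =>
    intro S hS
    obtain ⟨h1, h2⟩ := ih (stp k S a) (anc_mem_stp k hS a)
    rw [run_cons]
    refine ⟨h1, ?_⟩
    have := dec_le hS a
    simp only [List.length_cons]
    omega

lemma shortest (k : ℕ) (S : Finset (Fin (k+2))) (hS : anc k ∈ S) :
    nfaShortestSync (dlt k) S (Vv k S) := by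
  constructor
  · obtain ⟨w, hlen, hrun⟩ := exists_word k (Vv k S) S hS rfl
    exact ⟨w, by rw [nfaSync, hrun]; simp, hlen⟩
  · intro w hw
    obtain ⟨h1, h2⟩ := lower_bound k w S hS
    obtain ⟨x, hx⟩ := Finset.card_eq_one.1 hw
    rw [hx] at h1 h2
    simp at h1
    subst h1
    have : Vv k ({anc k} : Finset (Fin (k+2))) = 0 := by
      simp [Vv, fwt, anc]
    omega


theorem stmt2 (n : ℕ) (hn : 2 ≤ n) :
    ∃ δ : Fin n → Fin (2 * n - 2) → Finset (Fin n),
      (∀ q a, (δ q a).Nonempty) ∧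
      nfaShortestSync δ Finset.univ (2 ^ (n - 1) - 1) ∧
      nfaShortestSync δ ({⟨n - 2, by omega⟩, ⟨n - 1, by omega⟩} : Finset (Fin n))
        (2 ^ (n - 2)) := by
  obtain ⟨k, rfl⟩ : ∃ k, n = k + 2 := ⟨n - 2, by omega⟩
  refine ⟨dlt k, dlt_nonempty k, ?_, ?_⟩
  · have h := shortest k Finset.univ (mem_univ _)
    rw [Vv_univ k] at h
    convert h using 2 <;> simp
  · have hanc : anc k ∈ ({⟨k+2-2, by omega⟩, ⟨k+2-1, by omega⟩} : Finset (Fin (k+2))) := by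
      simp [anc, Fin.ext_iff]
    have h := shortest k _ hanc
    have hV : Vv k ({⟨k+2-2, by omega⟩, ⟨k+2-1, by omega⟩} : Finset (Fin (k+2))) = 2^k := by
      have hne : (⟨k+2-2, by omega⟩ : Fin (k+2)) ≠ ⟨k+2-1, by omega⟩ := by
        simp [Fin.ext_iff]
      rw [Vv, Finset.sum_pair hne]
      simp [fwt]
    rw [hV] at h
    have : (2:ℕ)^(k+2-2) = 2^k := by norm_num
    rw [this]
    exact h
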